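/- Let k, T ∈ ℕ with k ≥ 1 and let p be a real with 1/(2k) ≤ p ≤ 1/k. Under the product Bernoulli(p) probability measure on ω : Fin T → Fin k → Bool (all T·k coordinates independent, each true with probability p), the probability that there is NO round t ∈ Fin T in which process 0 transmits alone (i.e., ω t 0 = true and ω t j = false for all j ≠ 0) is at most exp(−T/(2·e·k)). (This is the probabilistic core of the Decay-based acknowledgment protocol: over T = Θ(k log n) rounds a fixed sender facing contention k is heard by a fixed neighbor with high probability.) -/

import Mathlib

open MeasureTheory

/-- The Bernoulli(p) measure on `Bool`: `true` has mass `p`, `false` has mass `1 - p`. -/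
noncomputable def bernoulliMeasure (p : ℝ) : Measure Bool :=
  ENNReal.ofReal p • Measure.dirac true + ENNReal.ofReal (1 - p) • Measure.dirac false

/-- The product Bernoulli(p) measure on `Fin T → Fin k → Bool`: all `T·k`
coordinates are independent, each `true` with probability `p`; `ω t j`
indicates whether process `j` transmits in round `t`. -/
noncomputable def decayMeasure (T k : ℕ) (p : ℝ) : Measure (Fin T → Fin k → Bool) :=
  Measure.pi fun _ : Fin T => Measure.pi fun _ : Fin k => bernoulliMeasure p

instance (p : ℝ) : IsFiniteMeasure (bernoulliMeasure p) := by
  constructor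
  simp [bernoulliMeasure]

lemma bern_true (p : ℝ) : bernoulliMeasure p {true} = ENNReal.ofReal p := by
  simp [bernoulliMeasure, Measure.dirac_apply]

lemma bern_false (p : ℝ) : bernoulliMeasure p {false} = ENNReal.ofReal (1 - p) := by
  simp [bernoulliMeasure, Measure.dirac_apply]

lemma bern_prob (p : ℝ) (h0 : 0 ≤ p) (h1 : p ≤ 1) :
    IsProbabilityMeasure (bernoulliMeasure p) := by
  constructor
  simp [bernoulliMeasure]
  rw [← ENNReal.ofReal_add h0 (by linarith)]
  norm_num

lemma hek (k' : ℕ) : Real.exp (-1) ≤ ((k' : ℝ) / (k' + 1)) ^ k' := by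
  rcases Nat.eq_zero_or_pos k' with h | h
  · subst h; simpa using Real.exp_le_exp.2 (by norm_num : (-1:ℝ) ≤ 0)
  · have hn : (0:ℝ) < k' := by exact_mod_cast h
    have key : Real.exp (-(1 / (k' : ℝ))) ≤ (k' : ℝ) / (k' + 1) := by
      have h1 : ((k':ℝ) + 1) / k' ≤ Real.exp (1 / k') := by
        have := Real.add_one_le_exp (1 / (k' : ℝ))
        rw [div_add' _ _ _ (ne_of_gt hn), one_mul, add_comm] at this
        exact this
      have h2 : (0:ℝ) < ((k':ℝ) + 1) / k' := by positivity
      calc Real.exp (-(1 / (k' : ℝ))) = (Real.exp (1 / (k':ℝ)))⁻¹ := by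
            rw [Real.exp_neg]
        _ ≤ (((k':ℝ) + 1) / k')⁻¹ := inv_anti₀ h2 h1
        _ = (k' : ℝ) / (k' + 1) := by rw [inv_div]
    calc Real.exp (-1) = Real.exp (-(1 / (k':ℝ))) ^ k' := by
          rw [← Real.exp_nat_mul]; congr 1; field_simp
      _ ≤ ((k' : ℝ) / (k' + 1)) ^ k' := pow_le_pow_left₀ (Real.exp_nonneg _) key k'

/-- **Probabilistic core of the Decay-based acknowledgment protocol.**
For `k ≥ 1` and `1/(2k) ≤ p ≤ 1/k`, under the product Bernoulli(p) measure on
`Fin T → Fin k → Bool`, the probability that in no round does process `0`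
transmit alone is at most `exp(−T/(2·e·k))`. -/
theorem decay_no_solo_round_probability (k T : ℕ) (hk : 1 ≤ k) (p : ℝ)
    (hp1 : 1 / (2 * k) ≤ p) (hp2 : p ≤ 1 / k) :
    decayMeasure T k p
        {ω | ¬ ∃ t : Fin T, ω t ⟨0, hk⟩ = true ∧
          ∀ j : Fin k, j ≠ ⟨0, hk⟩ → ω t j = false} ≤
      ENNReal.ofReal (Real.exp (-((T : ℝ) / (2 * Real.exp 1 * k)))) := by
  obtain ⟨k', rfl⟩ : ∃ k', k = k' + 1 := ⟨k - 1, (Nat.succ_pred_eq_of_pos hk).symm⟩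
  have hkR : (0:ℝ) < (k' : ℝ) + 1 := by positivity
  have hkcast : ((k' + 1 : ℕ) : ℝ) = (k' : ℝ) + 1 := by push_cast; ring
  rw [hkcast] at hp1 hp2
  have hp0 : 0 < p := lt_of_lt_of_le (by positivity) hp1
  have hple1 : p ≤ 1 := hp2.trans (by rw [div_le_one hkR]; linarith)
  have h1p : (k' : ℝ) / ((k':ℝ) + 1) ≤ 1 - p := by
    have : 1 - 1 / ((k':ℝ) + 1) = (k':ℝ) / ((k':ℝ) + 1) := by field_simp; ring
    linarith [this]
  have h1p0 : (0:ℝ) ≤ 1 - p := le_trans (by positivity) h1p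
  set q : ℝ := p * (1 - p) ^ k' with hq
  have hq0 : 0 ≤ q := by positivity
  have hq1 : q ≤ 1 := by
    calc q ≤ p * 1 := by
          exact mul_le_mul_of_nonneg_left (pow_le_one₀ h1p0 (by linarith : 1 - p ≤ 1)) hp0.le
      _ = p := mul_one p
      _ ≤ 1 := hple1
  have hqe : 1 / (2 * Real.exp 1 * ((k':ℝ) + 1)) ≤ q := by
    have hpow : Real.exp (-1) ≤ (1 - p) ^ k' :=
      le_trans (hek k') (pow_le_pow_left₀ (by positivity) h1p k')
    have hmul : 1 / (2 * ((k':ℝ) + 1)) * Real.exp (-1) ≤ q :=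
      mul_le_mul hp1 hpow (Real.exp_nonneg _) hp0.le
    have heq : 1 / (2 * Real.exp 1 * ((k':ℝ) + 1)) =
        1 / (2 * ((k':ℝ) + 1)) * Real.exp (-1) := by
      rw [Real.exp_neg]
      have := Real.exp_pos 1
      field_simp
    rw [heq]; exact hmul
  haveI : IsProbabilityMeasure (bernoulliMeasure p) := bern_prob p hp0.le hple1
  set ν : Measure (Fin (k' + 1) → Bool) :=
    Measure.pi (fun _ : Fin (k' + 1) => bernoulliMeasure p) with hν
  set B : Set (Fin (k' + 1) → Bool) :=
    {f | ¬ (f ⟨0, hk⟩ = true ∧ ∀ j : Fin (k' + 1), j ≠ ⟨0, hk⟩ → f j = false)} with hB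
  have hset : {ω : Fin T → Fin (k' + 1) → Bool |
      ¬ ∃ t : Fin T, ω t ⟨0, hk⟩ = true ∧
        ∀ j : Fin (k' + 1), j ≠ ⟨0, hk⟩ → ω t j = false}
      = Set.univ.pi (fun _ : Fin T => B) := by
    ext ω
    simp [hB, Set.mem_pi, not_exists]
  have hzero : (⟨0, hk⟩ : Fin (k' + 1)) = 0 := rfl
  have hBc : Bᶜ = Set.univ.pi (fun j : Fin (k' + 1) =>
      ({if j = ⟨0, hk⟩ then true else false} : Set Bool)) := by
    ext f
    simp only [hB, Set.mem_compl_iff, Set.mem_setOf_eq, not_not, Set.mem_pi, Set.mem_univ,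
      Set.mem_singleton_iff, forall_true_left]
    constructor
    · rintro ⟨h1, h2⟩ j
      by_cases hj : j = ⟨0, hk⟩
      · rw [if_pos hj, hj]; exact h1
      · rw [if_neg hj]; exact h2 j hj
    · intro h
      constructor
      · have := h ⟨0, hk⟩; rwa [if_pos rfl] at this
      · intro j hj; have := h j; rwa [if_neg hj] at this
  have hνBc : ν Bᶜ = ENNReal.ofReal q := by
    rw [hBc, hν, Measure.pi_pi, hzero, Fin.prod_univ_succ]
    have e1 : ({if (0 : Fin (k' + 1)) = 0 then true else false} : Set Bool) = {true} := by simp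
    have e2 : ∀ j : Fin k', ({if (j.succ : Fin (k' + 1)) = 0 then true else false} : Set Bool)
        = {false} := by
      intro j; simp [Fin.succ_ne_zero]
    simp only [e1, e2, bern_true, bern_false, Finset.prod_const, Finset.card_univ,
      Fintype.card_fin]
    norm_num [bern_true]
    rw [hq, ENNReal.ofReal_mul hp0.le, ENNReal.ofReal_pow h1p0]
  have hmBc : MeasurableSet Bᶜ := (Set.to_countable _).measurableSet
  have hνB : ν B = ENNReal.ofReal (1 - q) := by
    have hc := prob_compl_eq_one_sub (μ := ν) hmBc
    rw [compl_compl] at hc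
    rw [hc, hνBc, ← ENNReal.ofReal_one, ← ENNReal.ofReal_sub _ hq0]
  have hreal : (1 - q) ^ T ≤ Real.exp (-((T : ℝ) / (2 * Real.exp 1 * ((k' : ℝ) + 1)))) := by
    have h1 : 1 - q ≤ Real.exp (-q) := by
      have := Real.add_one_le_exp (-q); linarith
    calc (1 - q) ^ T ≤ Real.exp (-q) ^ T := pow_le_pow_left₀ (by linarith) h1 T
      _ = Real.exp ((T : ℝ) * (-q)) := (Real.exp_nat_mul _ T).symm
      _ = Real.exp (-((T : ℝ) * q)) := by rw [mul_neg]
      _ ≤ Real.exp (-((T : ℝ) / (2 * Real.exp 1 * ((k' : ℝ) + 1)))) := by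
          apply Real.exp_le_exp.2
          apply neg_le_neg
          calc (T : ℝ) / (2 * Real.exp 1 * ((k' : ℝ) + 1))
              = (T : ℝ) * (1 / (2 * Real.exp 1 * ((k' : ℝ) + 1))) := by ring
            _ ≤ (T : ℝ) * q := mul_le_mul_of_nonneg_left hqe (Nat.cast_nonneg T)
  rw [hkcast]
  calc decayMeasure T (k' + 1) p
        {ω | ¬ ∃ t : Fin T, ω t ⟨0, hk⟩ = true ∧
          ∀ j : Fin (k' + 1), j ≠ ⟨0, hk⟩ → ω t j = false}
      = ν B ^ T := by
        rw [hset, decayMeasure, Measure.pi_pi]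
        simp [Finset.prod_const]
        rw [hν]
    _ = ENNReal.ofReal ((1 - q) ^ T) := by
        rw [hνB, ← ENNReal.ofReal_pow (by linarith)]
    _ ≤ ENNReal.ofReal (Real.exp (-((T : ℝ) / (2 * Real.exp 1 * ((k' : ℝ) + 1))))) :=
        ENNReal.ofReal_le_ofReal hreal
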